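/- Let d ≥ 4 and let A : M(d,d) → M(d,d) be a linear map satisfying A(P_σ W P_σᵀ) = P_σ A(W) P_σᵀ for all σ ∈ S_d and all W. Then A preserves each of the four subspaces V_t = span{I_d, J_d − I_d}, V_s = 𝔻_{d,2} + 𝕊_{d,2} + 𝔸_{d,1}, V_x = 𝔸_{d,2}, and V_y = 𝕊_{d,3}; that is, A(V) ⊆ V for V ∈ {V_t, V_s, V_x, V_y}. -/

import Mathlib

open Matrix

/-- The permutation matrix of `σ`. -/
def permMat {d : ℕ} (σ : Equiv.Perm (Fin d)) : Matrix (Fin d) (Fin d) ℝ :=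
  Matrix.of fun i j => if σ j = i then (1 : ℝ) else 0

/-- The all-ones matrix. -/
def Jmat (d : ℕ) : Matrix (Fin d) (Fin d) ℝ := Matrix.of fun _ _ => (1 : ℝ)

/-- `𝔻_{d,2}`: trace-zero diagonal matrices. -/
def Dd2 (d : ℕ) : Submodule ℝ (Matrix (Fin d) (Fin d) ℝ) where
  carrier := {A | (∀ i j, i ≠ j → A i j = 0) ∧ ∑ i, A i i = 0}
  zero_mem' := ⟨fun i j _ => rfl, by simp⟩
  add_mem' := by
    rintro a b ⟨ha1, ha2⟩ ⟨hb1, hb2⟩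
    refine ⟨fun i j hij => ?_, ?_⟩
    · simp [Matrix.add_apply, ha1 i j hij, hb1 i j hij]
    · simp [Matrix.add_apply, Finset.sum_add_distrib, ha2, hb2]
  smul_mem' := by
    rintro c a ⟨ha1, ha2⟩
    refine ⟨fun i j hij => ?_, ?_⟩
    · simp [Matrix.smul_apply, ha1 i j hij]
    · simp [Matrix.smul_apply, ← Finset.mul_sum, ha2]

/-- `𝕊_{d,2}`: symmetric, zero diagonal, off-diagonal entries `x i + x j`, `∑ x = 0`. -/
def Sd2 (d : ℕ) : Submodule ℝ (Matrix (Fin d) (Fin d) ℝ) where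
  carrier := {A | ∃ x : Fin d → ℝ, (∑ i, x i = 0) ∧ (∀ i, A i i = 0) ∧
    ∀ i j, i ≠ j → A i j = x i + x j}
  zero_mem' := ⟨0, by simp, fun i => rfl, fun i j _ => by simp⟩
  add_mem' := by
    rintro a b ⟨x, hx0, hxd, hx⟩ ⟨y, hy0, hyd, hy⟩
    refine ⟨x + y, by simp [Finset.sum_add_distrib, hx0, hy0], fun i => ?_,
      fun i j hij => ?_⟩
    · simp [Matrix.add_apply, hxd i, hyd i]
    · simp [Matrix.add_apply, hx i j hij, hy i j hij]; ring
  smul_mem' := by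
    rintro c a ⟨x, hx0, hxd, hx⟩
    refine ⟨c • x, by simp [← Finset.mul_sum, hx0], fun i => ?_, fun i j hij => ?_⟩
    · simp [Matrix.smul_apply, hxd i]
    · simp [Matrix.smul_apply, hx i j hij]; ring

/-- `𝔸_{d,1}`: matrices with `A i j = x i − x j` for some `x ∈ ℝᵈ`. -/
def Ad1 (d : ℕ) : Submodule ℝ (Matrix (Fin d) (Fin d) ℝ) where
  carrier := {A | ∃ x : Fin d → ℝ, ∀ i j, A i j = x i - x j}
  zero_mem' := ⟨0, by simp⟩
  add_mem' := by
    rintro a b ⟨x, hx⟩ ⟨y, hy⟩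
    refine ⟨x + y, fun i j => ?_⟩
    simp [Matrix.add_apply, hx, hy]; ring
  smul_mem' := by
    rintro c a ⟨x, hx⟩
    refine ⟨c • x, fun i j => ?_⟩
    simp [Matrix.smul_apply, hx]; ring

/-- `𝔸_{d,2}`: skew-symmetric matrices with all row sums zero. -/
def Ad2 (d : ℕ) : Submodule ℝ (Matrix (Fin d) (Fin d) ℝ) where
  carrier := {A | Aᵀ = -A ∧ ∀ i, ∑ j, A i j = 0}
  zero_mem' := ⟨by simp, by simp⟩
  add_mem' := by
    rintro a b ⟨ha1, ha2⟩ ⟨hb1, hb2⟩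
    refine ⟨by rw [Matrix.transpose_add, ha1, hb1, neg_add], fun i => ?_⟩
    simp [Matrix.add_apply, Finset.sum_add_distrib, ha2 i, hb2 i]
  smul_mem' := by
    rintro c a ⟨ha1, ha2⟩
    refine ⟨by rw [Matrix.transpose_smul, ha1, smul_neg], fun i => ?_⟩
    simp [Matrix.smul_apply, ← Finset.mul_sum, ha2 i]

/-- `𝕊_{d,3}`: symmetric, zero diagonal, all row sums zero. -/
def Sd3 (d : ℕ) : Submodule ℝ (Matrix (Fin d) (Fin d) ℝ) where
  carrier := {A | Aᵀ = A ∧ (∀ i, A i i = 0) ∧ ∀ i, ∑ j, A i j = 0}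
  zero_mem' := ⟨by simp, fun i => rfl, by simp⟩
  add_mem' := by
    rintro a b ⟨ha1, ha2, ha3⟩ ⟨hb1, hb2, hb3⟩
    refine ⟨by rw [Matrix.transpose_add, ha1, hb1], fun i => ?_, fun i => ?_⟩
    · simp [Matrix.add_apply, ha2 i, hb2 i]
    · simp [Matrix.add_apply, Finset.sum_add_distrib, ha3 i, hb3 i]
  smul_mem' := by
    rintro c a ⟨ha1, ha2, ha3⟩
    refine ⟨by rw [Matrix.transpose_smul, ha1], fun i => ?_, fun i => ?_⟩
    · simp [Matrix.smul_apply, ha2 i]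
    · simp [Matrix.smul_apply, ← Finset.mul_sum, ha3 i]

/-- `V_t = span{I, J − I}`, the trivial isotypic component. -/
def Vt (d : ℕ) : Submodule ℝ (Matrix (Fin d) (Fin d) ℝ) :=
  Submodule.span ℝ {(1 : Matrix (Fin d) (Fin d) ℝ), Jmat d - 1}

/-- `V_s = 𝔻_{d,2} + 𝕊_{d,2} + 𝔸_{d,1}`, the standard isotypic component. -/
def Vs (d : ℕ) : Submodule ℝ (Matrix (Fin d) (Fin d) ℝ) := Dd2 d ⊔ Sd2 d ⊔ Ad1 d



open Matrix

section Aux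

variable {d : ℕ}

/-- The operator `T W = ∑_{a,b} P_{(a b)} W P_{(a b)}ᵀ` (sum over ordered pairs,
including `a = b`). It lies in the image of the group algebra, hence commutes with
any equivariant map, and acts as a scalar on each isotypic component. -/
noncomputable def Tfun (W : Matrix (Fin d) (Fin d) ℝ) : Matrix (Fin d) (Fin d) ℝ :=
  ∑ a : Fin d, ∑ b : Fin d,
    permMat (Equiv.swap a b) * W * (permMat (Equiv.swap a b))ᵀ

lemma conj_entry (σ : Equiv.Perm (Fin d)) (W : Matrix (Fin d) (Fin d) ℝ) (x y : Fin d) :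
    (permMat σ * W * (permMat σ)ᵀ) x y = W (σ.symm x) (σ.symm y) := by
  simp only [Matrix.mul_apply, Matrix.transpose_apply, permMat, Matrix.of_apply,
    Equiv.apply_eq_iff_eq_symm_apply]
  rw [Finset.sum_eq_single (σ.symm y)]
  · rw [Finset.sum_eq_single (σ.symm x)]
    · simp
    · intro b _ hb; simp [hb]
    · simp
  · intro b _ hb; simp [hb]
  · simp

lemma Tfun_entry (W : Matrix (Fin d) (Fin d) ℝ) (x y : Fin d) :
    Tfun W x y = ∑ a : Fin d, ∑ b : Fin d, W (Equiv.swap a b x) (Equiv.swap a b y) := by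
  simp [Tfun, Matrix.sum_apply, conj_entry]

lemma Tfun_add (U V : Matrix (Fin d) (Fin d) ℝ) : Tfun (U + V) = Tfun U + Tfun V := by
  simp [Tfun, Matrix.mul_add, Matrix.add_mul, Finset.sum_add_distrib]

lemma Tfun_smul (r : ℝ) (U : Matrix (Fin d) (Fin d) ℝ) : Tfun (r • U) = r • Tfun U := by
  simp [Tfun, Matrix.mul_smul, Matrix.smul_mul, Finset.smul_sum]

lemma sum_swap_diag (W : Matrix (Fin d) (Fin d) ℝ) (x : Fin d) :
    ∑ a : Fin d, ∑ b : Fin d, W (Equiv.swap a b x) (Equiv.swap a b x)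
      = 2 * ∑ k, W k k + ((d:ℝ)^2 - 2*d) * W x x := by
  have key : ∀ a : Fin d, ∑ b : Fin d, W (Equiv.swap a b x) (Equiv.swap a b x)
      = (W a a + ((d:ℝ) - 1) * W x x) +
        (if a = x then (∑ k, W k k) - (W x x + ((d:ℝ) - 1) * W x x) else 0) := by
    intro a
    by_cases ha : a = x
    · subst ha
      have : ∀ b : Fin d, W (Equiv.swap a b a) (Equiv.swap a b a) = W b b := by
        intro b; rw [Equiv.swap_apply_left]
      simp only [this]
      simp
    · have : ∀ b : Fin d, W (Equiv.swap a b x) (Equiv.swap a b x)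
          = W x x + (if b = x then W a a - W x x else 0) := by
        intro b
        by_cases hb : b = x
        · subst hb; rw [Equiv.swap_apply_right]; simp
        · rw [Equiv.swap_apply_of_ne_of_ne (Ne.symm ha) (Ne.symm hb)]; simp [hb]
      simp only [this, Finset.sum_add_distrib, Finset.sum_const, Finset.card_univ,
        Fintype.card_fin, nsmul_eq_mul, Finset.sum_ite_eq' Finset.univ x,
        Finset.mem_univ, if_true, if_neg ha]
      ring
  simp only [key, Finset.sum_add_distrib, Finset.sum_const, Finset.card_univ,
    Fintype.card_fin, nsmul_eq_mul, Finset.sum_ite_eq' Finset.univ x, Finset.mem_univ,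
    if_true]
  ring

lemma sum_swap_off (W : Matrix (Fin d) (Fin d) ℝ) {x y : Fin d} (hxy : x ≠ y) :
    ∑ a : Fin d, ∑ b : Fin d, W (Equiv.swap a b x) (Equiv.swap a b y)
      = ((d:ℝ)^2 - 4*d + 2) * W x y + 2 * W y x + 2 * ∑ k, W k y + 2 * ∑ k, W x k
        - 2 * W x x - 2 * W y y := by
  have key : ∀ a : Fin d, ∑ b : Fin d, W (Equiv.swap a b x) (Equiv.swap a b y)
      = (W a y + W x a + ((d:ℝ) - 2) * W x y)
        + (if a = x then ((∑ k, W k y) + W y x - W y y)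
            - (W x y + W x x + ((d:ℝ) - 2) * W x y) else 0)
        + (if a = y then ((∑ k, W x k) + W y x - W x x)
            - (W y y + W x y + ((d:ℝ) - 2) * W x y) else 0) := by
    intro a
    by_cases hax : a = x
    · have h1 : ∀ b : Fin d, W (Equiv.swap a b x) (Equiv.swap a b y)
          = W b y + (if b = y then W y x - W y y else 0) := by
        intro b
        simp only [Equiv.swap_apply_def, hax]
        split_ifs <;> subst_vars <;> (try ring) <;> simp_all
      simp only [h1, Finset.sum_add_distrib]
      simp [hax, hxy, Ne.symm hxy]
      ring
    · by_cases hay : a = y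
      · have h1 : ∀ b : Fin d, W (Equiv.swap a b x) (Equiv.swap a b y)
            = W x b + (if b = x then W y x - W x x else 0) := by
          intro b
          simp only [Equiv.swap_apply_def, hay]
          split_ifs <;> subst_vars <;> (try ring) <;> simp_all
        simp only [h1, Finset.sum_add_distrib]
        simp [hay, hax, hxy, Ne.symm hxy]
        ring
      · have h1 : ∀ b : Fin d, W (Equiv.swap a b x) (Equiv.swap a b y)
            = W x y + (if b = x then W a y - W x y else 0)
                + (if b = y then W x a - W x y else 0) := by
          intro b
          simp only [Equiv.swap_apply_def]
          split_ifs <;> subst_vars <;> (try ring) <;> simp_all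
        simp only [h1, Finset.sum_add_distrib]
        simp [hax, hay, Finset.card_univ]
        ring
  simp only [key, Finset.sum_add_distrib, Finset.sum_const, Finset.card_univ,
    Fintype.card_fin, nsmul_eq_mul, Finset.sum_ite_eq' Finset.univ x,
    Finset.sum_ite_eq' Finset.univ y, Finset.mem_univ, if_true]
  ring

/-- Eigen lemma for `V_t`. -/
lemma eig_Vt : ∀ W ∈ Vt d, Tfun W = ((d:ℝ)^2) • W := by
  have h1 : Tfun (1 : Matrix (Fin d) (Fin d) ℝ) = ((d:ℝ)^2) • (1 : Matrix (Fin d) (Fin d) ℝ) := by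
    ext x y
    rw [Tfun_entry]
    rcases eq_or_ne x y with rfl | hxy
    · rw [sum_swap_diag]
      simp [Matrix.one_apply]
    · rw [sum_swap_off _ hxy]
      simp [Matrix.one_apply, hxy, Ne.symm hxy]
  have h2 : Tfun (Jmat d - 1) = ((d:ℝ)^2) • (Jmat d - 1) := by
    ext x y
    rw [Tfun_entry]
    rcases eq_or_ne x y with rfl | hxy
    · rw [sum_swap_diag]
      simp [Jmat, Matrix.one_apply, Matrix.sub_apply]
    · rw [sum_swap_off _ hxy]
      simp [Jmat, Matrix.one_apply, Matrix.sub_apply, hxy, Ne.symm hxy,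
        Finset.sum_sub_distrib]
      ring
  intro W hW
  induction hW using Submodule.span_induction with
  | mem z hz =>
      rcases hz with rfl | hz
      · exact h1
      · rw [Set.mem_singleton_iff] at hz; rw [hz]; exact h2
  | zero => rw [show (0 : Matrix (Fin d) (Fin d) ℝ) = (0:ℝ) • 0 by simp, Tfun_smul]; simp
  | add u v _ _ hu hv => rw [Tfun_add, hu, hv, smul_add]
  | smul r u _ hu => rw [Tfun_smul, hu, smul_comm]

lemma eig_Dd2 : ∀ W ∈ Dd2 d, Tfun W = ((d:ℝ)^2 - 2*d) • W := by
  rintro W ⟨h0, htr⟩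
  ext x y
  rw [Tfun_entry]
  rcases eq_or_ne x y with rfl | hxy
  · rw [sum_swap_diag, htr]
    simp
  · rw [sum_swap_off _ hxy]
    have hcy : ∑ k, W k y = W y y :=
      Finset.sum_eq_single y (fun k _ hk => h0 k y hk) (by simp)
    have hrx : ∑ k, W x k = W x x :=
      Finset.sum_eq_single x (fun k _ hk => h0 x k (Ne.symm hk)) (by simp)
    rw [hcy, hrx, h0 x y hxy, h0 y x (Ne.symm hxy)]
    simp [Matrix.smul_apply, h0 x y hxy]

lemma eig_Sd2 : ∀ W ∈ Sd2 d, Tfun W = ((d:ℝ)^2 - 2*d) • W := by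
  rintro W ⟨v, hv0, hdiag, hoff⟩
  have htr : ∑ k, W k k = 0 := by simp [hdiag]
  have hcol : ∀ y : Fin d, ∑ k, W k y = ((d:ℝ) - 2) * v y := by
    intro y
    have : ∀ k : Fin d, W k y = v k + v y - (if k = y then v y + v y else 0) := by
      intro k
      rcases eq_or_ne k y with rfl | hk
      · simp [hdiag]
      · simp [hoff k y hk, hk]
    simp only [this, Finset.sum_sub_distrib, Finset.sum_add_distrib, hv0,
      Finset.sum_const, Finset.card_univ, Fintype.card_fin, nsmul_eq_mul,
      Finset.sum_ite_eq' Finset.univ y, Finset.mem_univ, if_true]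
    ring
  have hrow : ∀ x : Fin d, ∑ k, W x k = ((d:ℝ) - 2) * v x := by
    intro x
    have : ∀ k : Fin d, W x k = v x + v k - (if k = x then v x + v x else 0) := by
      intro k
      rcases eq_or_ne k x with rfl | hk
      · simp [hdiag]
      · simp [hoff x k (Ne.symm hk), hk]
    simp only [this, Finset.sum_sub_distrib, Finset.sum_add_distrib, hv0,
      Finset.sum_const, Finset.card_univ, Fintype.card_fin, nsmul_eq_mul,
      Finset.sum_ite_eq' Finset.univ x, Finset.mem_univ, if_true]
    ring
  ext x y
  rw [Tfun_entry]
  rcases eq_or_ne x y with rfl | hxy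
  · rw [sum_swap_diag, htr]
    simp [hdiag]
  · rw [sum_swap_off _ hxy, hcol, hrow, hoff x y hxy, hoff y x (Ne.symm hxy),
      hdiag x, hdiag y]
    simp [Matrix.smul_apply, hoff x y hxy]
    ring

lemma eig_Ad1 : ∀ W ∈ Ad1 d, Tfun W = ((d:ℝ)^2 - 2*d) • W := by
  rintro W ⟨v, hv⟩
  have htr : ∑ k, W k k = 0 := by simp [hv]
  ext x y
  rw [Tfun_entry]
  rcases eq_or_ne x y with rfl | hxy
  · rw [sum_swap_diag, htr]
    simp [hv]
  · rw [sum_swap_off _ hxy]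
    have hcol : ∑ k, W k y = (∑ k, v k) - (d:ℝ) * v y := by
      simp [hv, Finset.sum_sub_distrib]
    have hrow : ∑ k, W x k = (d:ℝ) * v x - (∑ k, v k) := by
      simp [hv, Finset.sum_sub_distrib]
    rw [hcol, hrow, hv x y, hv y x, hv x x, hv y y]
    simp [Matrix.smul_apply, hv x y]
    ring

lemma eig_Vs : ∀ W ∈ Vs d, Tfun W = ((d:ℝ)^2 - 2*d) • W := by
  have hsub : ∀ (c : ℝ) (u w : Matrix (Fin d) (Fin d) ℝ),
      Tfun u = c • u → Tfun w = c • w → Tfun (u + w) = c • (u + w) := by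
    intro c u w hu hw
    rw [Tfun_add, hu, hw, smul_add]
  intro W hW
  rw [Vs, Submodule.mem_sup] at hW
  obtain ⟨uv, huv, z, hz, rfl⟩ := hW
  rw [Submodule.mem_sup] at huv
  obtain ⟨u, hu, v, hv, rfl⟩ := huv
  exact hsub _ _ _ (hsub _ _ _ (eig_Dd2 u hu) (eig_Sd2 v hv)) (eig_Ad1 z hz)

lemma eig_Ad2 : ∀ W ∈ Ad2 d, Tfun W = ((d:ℝ)^2 - 4*d) • W := by
  rintro W ⟨hskew, hrow⟩
  have hskew' : ∀ i j, W j i = - W i j := by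
    intro i j
    have := congrFun (congrFun hskew i) j
    simpa [Matrix.transpose_apply, Matrix.neg_apply] using this
  have hdiag : ∀ i, W i i = 0 := by
    intro i
    have := hskew' i i
    linarith
  have hcol : ∀ y, ∑ k, W k y = 0 := by
    intro y
    have : ∑ k, W k y = - ∑ k, W y k := by
      rw [← Finset.sum_neg_distrib]
      exact Finset.sum_congr rfl fun k _ => by rw [hskew' y k]
    rw [this, hrow y, neg_zero]
  ext x y
  rw [Tfun_entry]
  rcases eq_or_ne x y with rfl | hxy
  · rw [sum_swap_diag]
    simp [hdiag]
  · rw [sum_swap_off _ hxy, hcol, hrow, hskew' x y, hdiag, hdiag]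
    simp [Matrix.smul_apply]
    ring

lemma eig_Sd3 : ∀ W ∈ Sd3 d, Tfun W = ((d:ℝ)^2 - 4*d + 4) • W := by
  rintro W ⟨hsym, hdiag, hrow⟩
  have hsym' : ∀ i j, W j i = W i j := by
    intro i j
    have := congrFun (congrFun hsym i) j
    simpa [Matrix.transpose_apply] using this
  have hcol : ∀ y, ∑ k, W k y = 0 := by
    intro y
    have : ∑ k, W k y = ∑ k, W y k :=
      Finset.sum_congr rfl fun k _ => hsym' y k
    rw [this, hrow y]
  ext x y
  rw [Tfun_entry]
  rcases eq_or_ne x y with rfl | hxy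
  · rw [sum_swap_diag]
    simp [hdiag]
  · rw [sum_swap_off _ hxy, hcol, hrow, hsym' x y, hdiag, hdiag]
    simp [Matrix.smul_apply]
    ring

end Aux

lemma decomp (hd : 4 ≤ d) (U : Matrix (Fin d) (Fin d) ℝ) :
    ∃ p ∈ Vt d, ∃ q ∈ Vs d, ∃ x ∈ Ad2 d, ∃ y ∈ Sd3 d, U = p + q + x + y := by
  have hD : (4:ℝ) ≤ (d:ℝ) := by exact_mod_cast hd
  have hd0 : (d:ℝ) ≠ 0 := by linarith
  have hd1 : (d:ℝ) - 1 ≠ 0 := by linarith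
  have hd2 : (d:ℝ) - 2 ≠ 0 := by linarith
  set t := ∑ i, U i i with ht
  set r := fun i => ∑ j, U i j with hr
  set c := fun i => ∑ j, U j i with hc
  set s0 := ∑ i, r i with hs0
  have hsum_r : ∑ i, r i = s0 := rfl
  have hsum_c : ∑ i, c i = s0 := by
    rw [hs0]; simp only [hr, hc]; exact Finset.sum_comm
  set v1 := fun i => (r i - c i) / (2*(d:ℝ)) with hv1
  have hv1sum : ∑ i, v1 i = 0 := by
    simp only [hv1, div_eq_mul_inv, ← Finset.sum_mul, Finset.sum_sub_distrib,
      hsum_r, hsum_c, sub_self, zero_mul]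
  set m := (s0 - t) / ((d:ℝ)*((d:ℝ)-1)) with hm
  set ρ := fun i => (r i + c i)/2 - U i i with hρ
  have hρsum : ∑ i, ρ i = s0 - t := by
    have h2 : ∑ x, (r x + c x)/2 = (∑ x, r x)/2 + (∑ x, c x)/2 := by
      rw [← Finset.sum_div, Finset.sum_add_distrib]; ring
    simp only [hρ, Finset.sum_sub_distrib, h2, hsum_r, hsum_c, ← ht]
    ring
  set v2 := fun i => (ρ i - m*((d:ℝ)-1)) / ((d:ℝ)-2) with hv2
  have hv2sum : ∑ i, v2 i = 0 := by
    have hnum : ∑ i, (ρ i - m*((d:ℝ)-1)) = 0 := by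
      rw [Finset.sum_sub_distrib, hρsum, Finset.sum_const, Finset.card_univ,
        Fintype.card_fin, nsmul_eq_mul, hm]
      field_simp
      ring
    simp only [hv2]
    rw [← Finset.sum_div, hnum, zero_div]
  -- the five pieces
  set p : Matrix (Fin d) (Fin d) ℝ := (t/(d:ℝ)) • (1 : Matrix (Fin d) (Fin d) ℝ)
      + m • (Jmat d - 1) with hp
  set Dg : Matrix (Fin d) (Fin d) ℝ :=
      Matrix.of (fun i j => if i = j then U i i - t/(d:ℝ) else 0) with hDg
  set Sm : Matrix (Fin d) (Fin d) ℝ :=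
      Matrix.of (fun i j => if i = j then 0 else v2 i + v2 j) with hSm
  set Am : Matrix (Fin d) (Fin d) ℝ := Matrix.of (fun i j => v1 i - v1 j) with hAm
  set Xm : Matrix (Fin d) (Fin d) ℝ :=
      Matrix.of (fun i j => (U i j - U j i)/2 - (v1 i - v1 j)) with hXm
  set Ym : Matrix (Fin d) (Fin d) ℝ :=
      Matrix.of (fun i j => if i = j then 0 else (U i j + U j i)/2 - m - (v2 i + v2 j))
      with hYm
  have hpmem : p ∈ Vt d := by
    refine add_mem (Submodule.smul_mem _ _ ?_) (Submodule.smul_mem _ _ ?_)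
    · exact Submodule.subset_span (Set.mem_insert _ _)
    · exact Submodule.subset_span (Set.mem_insert_of_mem _ rfl)
  have hDgmem : Dg ∈ Dd2 d := by
    refine ⟨fun i j hij => by simp [hDg, hij], ?_⟩
    have hsum : ∑ i, (U i i - t/(d:ℝ)) = t - (d:ℝ)*(t/(d:ℝ)) := by
      rw [Finset.sum_sub_distrib, ← ht, Finset.sum_const, Finset.card_univ,
        Fintype.card_fin, nsmul_eq_mul]
    simp only [hDg, Matrix.of_apply, if_true, eq_self_iff_true]
    rw [hsum]
    field_simp
    ring
  have hSmmem : Sm ∈ Sd2 d := by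
    exact ⟨v2, hv2sum, fun i => by simp [hSm], fun i j hij => by simp [hSm, hij]⟩
  have hAmmem : Am ∈ Ad1 d := ⟨v1, fun i j => rfl⟩
  have hqmem : Dg + Sm + Am ∈ Vs d := by
    refine add_mem (add_mem ?_ ?_) ?_
    · exact (le_sup_of_le_left le_sup_left : Dd2 d ≤ Vs d) hDgmem
    · exact (le_sup_of_le_left le_sup_right : Sd2 d ≤ Vs d) hSmmem
    · exact (le_sup_right : Ad1 d ≤ Vs d) hAmmem
  have hXmem : Xm ∈ Ad2 d := by
    constructor
    · ext i j
      simp only [hXm, Matrix.transpose_apply, Matrix.neg_apply, Matrix.of_apply]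
      ring
    · intro i
      have hentry : ∀ j, Xm i j = (U i j - U j i)/2 - v1 i + v1 j := by
        intro j; simp only [hXm, Matrix.of_apply]; ring
      simp only [hentry, Finset.sum_add_distrib, Finset.sum_sub_distrib,
        hv1sum, Finset.sum_const, Finset.card_univ,
        Fintype.card_fin, nsmul_eq_mul]
      have hsplit : ∑ x, (U i x - U x i)/2 = (r i - c i)/2 := by
        rw [← Finset.sum_div, Finset.sum_sub_distrib]
      rw [hsplit, hv1]
      field_simp
      ring
  have hYmem : Ym ∈ Sd3 d := by
    refine ⟨?_, fun i => by simp [hYm], ?_⟩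
    · ext i j
      simp only [hYm, Matrix.transpose_apply, Matrix.of_apply]
      rcases eq_or_ne i j with rfl | hij
      · simp
      · rw [if_neg (Ne.symm hij), if_neg hij]
        ring
    · intro i
      have hentry : ∀ j, Ym i j
          = ((U i j + U j i)/2 - m - v2 i - v2 j)
            - (if j = i then (U i i + U i i)/2 - m - v2 i - v2 i else 0) := by
        intro j
        rcases eq_or_ne j i with rfl | hij
        · simp [hYm]
        · simp only [hYm, Matrix.of_apply, if_neg (Ne.symm hij), if_neg hij]
          ring
      simp only [hentry, Finset.sum_sub_distrib, Finset.sum_add_distrib,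
        Finset.sum_const, Finset.card_univ, Fintype.card_fin,
        nsmul_eq_mul, hv2sum, Finset.sum_ite_eq' Finset.univ i, Finset.mem_univ,
        if_true]
      have hsplit : ∑ x, (U i x + U x i)/2 = (r i + c i)/2 := by
        rw [← Finset.sum_div, Finset.sum_add_distrib]
      rw [hsplit]
      have key : ((d:ℝ)-2) * v2 i = (r i + c i)/2 - U i i - m*((d:ℝ)-1) := by
        rw [hv2, hρ]; field_simp
      linear_combination -1 * key
  refine ⟨p, hpmem, Dg + Sm + Am, hqmem, Xm, hXmem, Ym, hYmem, ?_⟩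
  ext i j
  rcases eq_or_ne i j with rfl | hij
  · simp only [Matrix.add_apply, hp, hDg, hSm, hAm, hXm, hYm, Matrix.of_apply,
      Matrix.smul_apply, Matrix.one_apply_eq, Matrix.sub_apply, Jmat,
      if_pos rfl, smul_eq_mul]
    field_simp
    simp only [if_true]
    field_simp
    ring
  · simp only [Matrix.add_apply, hp, hDg, hSm, hAm, hXm, hYm, Matrix.of_apply,
      Matrix.smul_apply, Matrix.one_apply_ne hij, Matrix.sub_apply, Jmat,
      if_neg hij, smul_eq_mul]
    ring

lemma preserve_aux {d : ℕ}
    (A : Matrix (Fin d) (Fin d) ℝ →ₗ[ℝ] Matrix (Fin d) (Fin d) ℝ)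
    (hcomm : ∀ W, A (Tfun W) = Tfun (A W))
    (V V1 V2 V3 : Submodule ℝ (Matrix (Fin d) (Fin d) ℝ)) (e c1 c2 c3 : ℝ)
    (hV : ∀ W ∈ V, Tfun W = e • W)
    (h1 : ∀ W ∈ V1, Tfun W = c1 • W)
    (h2 : ∀ W ∈ V2, Tfun W = c2 • W)
    (h3 : ∀ W ∈ V3, Tfun W = c3 • W)
    (hdec : ∀ U : Matrix (Fin d) (Fin d) ℝ,
      ∃ p ∈ V, ∃ q ∈ V1, ∃ x ∈ V2, ∃ y ∈ V3, U = p + q + x + y)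
    (hk : (e - c1) * ((e - c2) * (e - c3)) ≠ 0) :
    ∀ W ∈ V, A W ∈ V := by
  set F : ℝ → Matrix (Fin d) (Fin d) ℝ → Matrix (Fin d) (Fin d) ℝ :=
    fun c U => Tfun U - c • U with hF
  have hFadd : ∀ (c : ℝ) (U W : Matrix (Fin d) (Fin d) ℝ),
      F c (U + W) = F c U + F c W := by
    intro c U W; simp only [hF, Tfun_add, smul_add]; abel
  have hFeig : ∀ (cc cV : ℝ) (U : Matrix (Fin d) (Fin d) ℝ),
      Tfun U = cV • U → F cc U = (cV - cc) • U := by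
    intro cc cV U h; simp only [hF, h, sub_smul]
  have hFsmul : ∀ (c r : ℝ) (U : Matrix (Fin d) (Fin d) ℝ),
      F c (r • U) = r • F c U := by
    intro c r U; simp only [hF, Tfun_smul, smul_sub, smul_comm r c]
  set π : Matrix (Fin d) (Fin d) ℝ → Matrix (Fin d) (Fin d) ℝ :=
    fun U => F c1 (F c2 (F c3 U)) with hπ
  have hπeig : ∀ (cV : ℝ) (U : Matrix (Fin d) (Fin d) ℝ), Tfun U = cV • U →
      π U = ((cV - c1) * ((cV - c2) * (cV - c3))) • U := by
    intro cV U h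
    simp only [hπ]
    rw [hFeig c3 cV U h, hFsmul, hFeig c2 cV U h, hFsmul, hFsmul, hFeig c1 cV U h,
      smul_smul, smul_smul]
    congr 1
    ring
  have hπmem : ∀ U, π U ∈ V := by
    intro U
    obtain ⟨p, hp, q, hq, x, hx, y, hy, rfl⟩ := hdec U
    have hsplit : π (p + q + x + y) = π p + π q + π x + π y := by
      simp only [hπ, hFadd]
    rw [hsplit, hπeig e p (hV p hp), hπeig c1 q (h1 q hq), hπeig c2 x (h2 x hx),
      hπeig c3 y (h3 y hy)]
    have z1 : ((c1 - c1) * ((c1 - c2) * (c1 - c3))) = 0 := by ring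
    have z2 : ((c2 - c1) * ((c2 - c2) * (c2 - c3))) = 0 := by ring
    have z3 : ((c3 - c1) * ((c3 - c2) * (c3 - c3))) = 0 := by ring
    rw [z1, z2, z3, zero_smul, zero_smul, zero_smul, add_zero, add_zero, add_zero]
    exact Submodule.smul_mem _ _ hp
  have hAπ : ∀ U, A (π U) = π (A U) := by
    intro U
    simp only [hπ, hF, map_sub, _root_.map_smul, hcomm]
  intro W hW
  have hkW : π W = ((e - c1) * ((e - c2) * (e - c3))) • W := hπeig e W (hV W hW)
  have hrew : A W = ((e - c1) * ((e - c2) * (e - c3)))⁻¹ • π (A W) := by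
    rw [← hAπ, hkW, _root_.map_smul, smul_smul, inv_mul_cancel₀ hk, one_smul]
  rw [hrew]
  exact Submodule.smul_mem _ _ (hπmem (A W))

/-- for `d ≥ 4`, any `S_d`-equivariant linear endomorphism of `M(d,d)`
(for the diagonal action `W ↦ P_σ W P_σᵀ`) preserves each of the four isotypic
components `V_t`, `V_s`, `V_x = 𝔸_{d,2}` and `V_y = 𝕊_{d,3}`. -/
theorem equivariant_map_preserves_isotypic_components (d : ℕ) (hd : 4 ≤ d)
    (A : Matrix (Fin d) (Fin d) ℝ →ₗ[ℝ] Matrix (Fin d) (Fin d) ℝ)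
    (hA : ∀ (σ : Equiv.Perm (Fin d)) (W : Matrix (Fin d) (Fin d) ℝ),
      A (permMat σ * W * (permMat σ)ᵀ) = permMat σ * A W * (permMat σ)ᵀ) :
    (∀ W ∈ Vt d, A W ∈ Vt d) ∧
    (∀ W ∈ Vs d, A W ∈ Vs d) ∧
    (∀ W ∈ Ad2 d, A W ∈ Ad2 d) ∧
    (∀ W ∈ Sd3 d, A W ∈ Sd3 d) := by
  have hcomm : ∀ W, A (Tfun W) = Tfun (A W) := by
    intro W
    simp only [Tfun, map_sum, hA]
  have hD : (4:ℝ) ≤ (d:ℝ) := by exact_mod_cast hd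
  have hdec := decomp hd
  refine ⟨?_, ?_, ?_, ?_⟩
  · refine preserve_aux A hcomm (Vt d) (Vs d) (Ad2 d) (Sd3 d)
      ((d:ℝ)^2) ((d:ℝ)^2 - 2*d) ((d:ℝ)^2 - 4*d) ((d:ℝ)^2 - 4*d + 4)
      eig_Vt eig_Vs eig_Ad2 eig_Sd3 (fun U => ?_) ?_
    · obtain ⟨p, hp, q, hq, x, hx, y, hy, hU⟩ := hdec U
      exact ⟨p, hp, q, hq, x, hx, y, hy, hU⟩
    · exact mul_ne_zero (fun h => by linarith)
        (mul_ne_zero (fun h => by linarith) (fun h => by linarith))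
  · refine preserve_aux A hcomm (Vs d) (Vt d) (Ad2 d) (Sd3 d)
      ((d:ℝ)^2 - 2*d) ((d:ℝ)^2) ((d:ℝ)^2 - 4*d) ((d:ℝ)^2 - 4*d + 4)
      eig_Vs eig_Vt eig_Ad2 eig_Sd3 (fun U => ?_) ?_
    · obtain ⟨p, hp, q, hq, x, hx, y, hy, hU⟩ := hdec U
      exact ⟨q, hq, p, hp, x, hx, y, hy, by rw [hU]; abel⟩
    · exact mul_ne_zero (fun h => by linarith)
        (mul_ne_zero (fun h => by linarith) (fun h => by linarith))
  · refine preserve_aux A hcomm (Ad2 d) (Vt d) (Vs d) (Sd3 d)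
      ((d:ℝ)^2 - 4*d) ((d:ℝ)^2) ((d:ℝ)^2 - 2*d) ((d:ℝ)^2 - 4*d + 4)
      eig_Ad2 eig_Vt eig_Vs eig_Sd3 (fun U => ?_) ?_
    · obtain ⟨p, hp, q, hq, x, hx, y, hy, hU⟩ := hdec U
      exact ⟨x, hx, p, hp, q, hq, y, hy, by rw [hU]; abel⟩
    · exact mul_ne_zero (fun h => by linarith)
        (mul_ne_zero (fun h => by linarith) (fun h => by linarith))
  · refine preserve_aux A hcomm (Sd3 d) (Vt d) (Vs d) (Ad2 d)
      ((d:ℝ)^2 - 4*d + 4) ((d:ℝ)^2) ((d:ℝ)^2 - 2*d) ((d:ℝ)^2 - 4*d)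
      eig_Sd3 eig_Vt eig_Vs eig_Ad2 (fun U => ?_) ?_
    · obtain ⟨p, hp, q, hq, x, hx, y, hy, hU⟩ := hdec U
      exact ⟨y, hy, p, hp, q, hq, x, hx, by rw [hU]; abel⟩
    · exact mul_ne_zero (fun h => by linarith)
        (mul_ne_zero (fun h => by linarith) (fun h => by linarith))
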